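/- For all a, b ∈ [0,∞] with a ≤ b, there exist sequences (ℓ_p)_{p≥1} and (γ_p)_{p≥1} of positive real numbers such that: (a) lim_{p→∞} γ_{2p+1} = a and lim_{p→∞} γ_{2p} = b (limits in [0,∞]); (b) lim_{p→∞} (ℓ_{p+1} − ℓ_p) = ∞; (c) lim_{p→∞} ℓ_p / e^{γ_p ℓ_p} = 0; (d) limsup_{p→∞} γ_{p+1} ℓ_{p+1} / ℓ_p ≤ b; (e) γ_p ℓ_p + 1 ≤ γ_{p+1} ℓ_{p+1} for all p ∈ ℕ; (f) for any constant c ≥ 0, lim_{p→∞} (cp + Σ_{j=1}^{p} ℓ_j) / e^{γ_p ℓ_p} = 0. -/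

import Mathlib

open Filter
open scoped ENNReal

namespace Paper

noncomputable def G (x : ℝ≥0∞) (q : ℕ) : ℝ :=
  if x = ∞ then (q + 1 : ℝ) else x.toReal + 1 / (q + 1)

noncomputable def gam (a b : ℝ≥0∞) (q : ℕ) : ℝ :=
  if Even q then G b q else G a q

noncomputable def ell (a b : ℝ≥0∞) : ℕ → ℝ
  | 0 => 1
  | p + 1 => max (ell a b p + p) ((gam a b p * ell a b p + 1) / gam a b (p + 1))

lemma inv_le_G (x : ℝ≥0∞) (q : ℕ) : 1 / ((q : ℝ) + 1) ≤ G x q := by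
  have hq : (0:ℝ) < (q:ℝ) + 1 := by positivity
  unfold G
  split_ifs with h
  · have : 1 / ((q:ℝ)+1) ≤ 1 := by
      rw [div_le_one hq]; linarith
    linarith
  · have := ENNReal.toReal_nonneg (a := x)
    linarith

lemma G_pos (x : ℝ≥0∞) (q : ℕ) : 0 < G x q :=
  lt_of_lt_of_le (by positivity) (inv_le_G x q)

lemma inv_le_gam (a b : ℝ≥0∞) (q : ℕ) : 1 / ((q : ℝ) + 1) ≤ gam a b q := by
  unfold gam; split_ifs <;> exact inv_le_G _ q

lemma gam_pos (a b : ℝ≥0∞) (q : ℕ) : 0 < gam a b q := by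
  unfold gam; split_ifs <;> exact G_pos _ q

lemma one_le_gam_zero (a b : ℝ≥0∞) : 1 ≤ gam a b 0 := by
  have : gam a b 0 = G b 0 := by unfold gam; simp
  rw [this]; unfold G
  split_ifs with h
  · norm_num
  · have := ENNReal.toReal_nonneg (a := b)
    push_cast
    linarith

lemma tendsto_ofReal_G (x : ℝ≥0∞) (f : ℕ → ℕ) (hf : Tendsto f atTop atTop) :
    Tendsto (fun q => ENNReal.ofReal (G x (f q))) atTop (nhds x) := by
  by_cases h : x = ∞
  · have h1 : Tendsto (fun q => ((f q : ℝ) + 1)) atTop atTop :=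
      (tendsto_natCast_atTop_atTop.comp hf).atTop_add tendsto_const_nhds
    have h2 := ENNReal.tendsto_ofReal_atTop.comp h1
    simp only [G, if_pos h, h]
    exact h2
  · have h1 : Tendsto (fun q => x.toReal + 1 / ((f q : ℝ) + 1)) atTop (nhds (x.toReal + 0)) :=
      tendsto_const_nhds.add (tendsto_one_div_add_atTop_nhds_zero_nat.comp hf)
    rw [add_zero] at h1
    have h2 := (ENNReal.continuous_ofReal.tendsto _).comp h1
    simp only [G, if_neg h]
    simpa [Function.comp_def, ENNReal.ofReal_toReal h] using h2


variable (a b : ℝ≥0∞)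

lemma ell_succ (p : ℕ) : ell a b (p+1)
    = max (ell a b p + p) ((gam a b p * ell a b p + 1) / gam a b (p+1)) := rfl

lemma ell_succ_ge (p : ℕ) : ell a b p + p ≤ ell a b (p+1) := le_max_left _ _

lemma one_le_ell (p : ℕ) : 1 ≤ ell a b p := by
  induction p with
  | zero => simp [ell]
  | succ p ih =>
    have h := ell_succ_ge a b p
    have hp : (0:ℝ) ≤ (p:ℝ) := Nat.cast_nonneg p
    linarith

lemma ell_pos (p : ℕ) : 0 < ell a b p := lt_of_lt_of_le one_pos (one_le_ell a b p)

lemma ell_mono : Monotone (ell a b) := by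
  apply monotone_nat_of_le_succ
  intro p
  have h := ell_succ_ge a b p
  have hp : (0:ℝ) ≤ (p:ℝ) := Nat.cast_nonneg p
  linarith

lemma ell_lb (p : ℕ) : (p:ℝ) * ((p:ℝ) - 1) / 2 ≤ ell a b p := by
  induction p with
  | zero => simp [ell]
  | succ p ih =>
    have h := ell_succ_ge a b p
    push_cast
    push_cast at ih
    nlinarith

lemma t_succ (p : ℕ) :
    gam a b p * ell a b p + 1 ≤ gam a b (p+1) * ell a b (p+1) := by
  have h : (gam a b p * ell a b p + 1) / gam a b (p+1) ≤ ell a b (p+1) := by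
    rw [ell_succ]; exact le_max_right _ _
  have hg := gam_pos a b (p+1)
  rw [div_le_iff₀ hg] at h
  calc gam a b p * ell a b p + 1 ≤ ell a b (p+1) * gam a b (p+1) := h
    _ = gam a b (p+1) * ell a b (p+1) := mul_comm _ _

lemma t_ge (p : ℕ) : (p:ℝ) + 1 ≤ gam a b p * ell a b p := by
  induction p with
  | zero =>
    have h := one_le_gam_zero a b
    simp [ell]
    linarith
  | succ p ih =>
    have h := t_succ a b p
    push_cast
    linarith

lemma t_pos (p : ℕ) : 0 < gam a b p * ell a b p :=
  lt_of_lt_of_le (by positivity) (t_ge a b p)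

lemma ell_le_t (p : ℕ) : ell a b p ≤ ((p:ℝ)+1) * (gam a b p * ell a b p) := by
  have h := inv_le_gam a b p
  have hl := ell_pos a b p
  have hp : (0:ℝ) < (p:ℝ)+1 := by positivity
  have := mul_le_mul_of_nonneg_right h (le_of_lt hl)
  rw [div_mul_eq_mul_div, one_mul] at this
  calc ell a b p = ((p:ℝ)+1) * (ell a b p / ((p:ℝ)+1)) := by field_simp
    _ ≤ ((p:ℝ)+1) * (gam a b p * ell a b p) :=
        mul_le_mul_of_nonneg_left this (le_of_lt hp)


lemma key_bound (p : ℕ) (x K : ℝ) (hK : 0 ≤ K)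
    (hx : x ≤ K * (gam a b p * ell a b p)) :
    x / Real.exp (gam a b p * ell a b p)
      ≤ 2 * K * Real.exp (-(((p:ℝ)+1)/2)) := by
  set t := gam a b p * ell a b p with ht_def
  have ht : (p:ℝ)+1 ≤ t := t_ge a b p
  have h2 : t ≤ 2*Real.exp (t/2) := by nlinarith [Real.add_one_le_exp (t/2)]
  have hexp : Real.exp t = Real.exp (t/2) * Real.exp (t/2) := by
    rw [← Real.exp_add]; ring_nf
  have hpos : 0 < Real.exp (t/2) := Real.exp_pos _
  have hpos2 : 0 < Real.exp (((p:ℝ)+1)/2) := Real.exp_pos _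
  calc x / Real.exp t ≤ (K*(2*Real.exp (t/2))) / Real.exp t := by
        gcongr
        calc x ≤ K * t := hx
          _ ≤ K*(2*Real.exp (t/2)) := mul_le_mul_of_nonneg_left h2 hK
    _ = 2*K / Real.exp (t/2) := by rw [hexp]; field_simp
    _ ≤ 2*K / Real.exp (((p:ℝ)+1)/2) :=
        div_le_div_of_nonneg_left (by linarith) hpos2 (Real.exp_le_exp.2 (by linarith))
    _ = 2*K*Real.exp (-(((p:ℝ)+1)/2)) := by
        rw [Real.exp_neg, div_eq_mul_inv]

lemma poly_exp (n : ℕ) :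
    Tendsto (fun p : ℕ => ((p:ℝ)+1)^n * Real.exp (-(((p:ℝ)+1)/2))) atTop (nhds 0) := by
  have hq : Tendsto (fun p : ℕ => ((p:ℝ)+1)/2) atTop atTop := by
    apply Tendsto.atTop_div_const (by norm_num)
    exact tendsto_atTop_add_const_right _ _ tendsto_natCast_atTop_atTop
  have h := (Real.tendsto_pow_mul_exp_neg_atTop_nhds_zero n).comp hq
  have h2 := h.const_mul ((2:ℝ)^n)
  rw [mul_zero] at h2
  refine h2.congr (fun p => ?_)
  simp only [Function.comp]
  rw [div_pow]
  field_simp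

lemma div_ell_zero : Tendsto (fun p : ℕ => (p:ℝ)/ell a b p) atTop (nhds 0) := by
  apply squeeze_zero' (g := fun p : ℕ => 2/((p:ℝ)-1))
  · exact Eventually.of_forall fun p => div_nonneg (Nat.cast_nonneg p) (ell_pos a b p).le
  · filter_upwards [eventually_ge_atTop 2] with p hp
    have hp2 : (2:ℝ) ≤ (p:ℝ) := by exact_mod_cast hp
    have h1 : (0:ℝ) < (p:ℝ) - 1 := by linarith
    have h2 := ell_lb a b p
    have h3 := ell_pos a b p
    rw [div_le_div_iff₀ h3 h1]
    nlinarith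
  · apply Tendsto.div_atTop (tendsto_const_nhds)
    exact tendsto_atTop_add_const_right _ _ tendsto_natCast_atTop_atTop

lemma inv_ell_zero : Tendsto (fun p : ℕ => 1/ell a b p) atTop (nhds 0) := by
  apply squeeze_zero' (g := fun p : ℕ => (p:ℝ)/ell a b p)
  · exact Eventually.of_forall fun p => div_nonneg zero_le_one (ell_pos a b p).le
  · filter_upwards [eventually_ge_atTop 1] with p hp
    have hp2 : (1:ℝ) ≤ (p:ℝ) := by exact_mod_cast hp
    have h3 := ell_pos a b p
    gcongr
  · exact div_ell_zero a b


lemma gam_odd (p : ℕ) : gam a b (2*p+1) = G a (2*p+1) := by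
  unfold gam
  rw [if_neg]
  simp [Nat.even_add_one, parity_simps]

lemma gam_even (p : ℕ) : gam a b (2*p) = G b (2*p) := by
  unfold gam
  rw [if_pos (even_two_mul p)]

lemma gam_le (ha : a ≠ ⊤) (hb : b ≠ ⊤) (hab : a ≤ b) (q : ℕ) :
    gam a b q ≤ b.toReal + 1/((q:ℝ)+1) := by
  have h : a.toReal ≤ b.toReal := (ENNReal.toReal_le_toReal ha hb).2 hab
  unfold gam G
  rw [if_neg ha, if_neg hb]
  split_ifs <;> linarith


/-- **Computational lemma.** For all `a ≤ b` in `[0,∞]` there exist sequences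
`(ℓ_p)_{p≥1}`, `(γ_p)_{p≥1}` of positive reals with properties (a)–(f). -/
theorem computational_lemma (a b : ℝ≥0∞) (hab : a ≤ b) :
    ∃ ℓ γ : ℕ → ℝ,
      (∀ p, 1 ≤ p → 0 < ℓ p) ∧
      (∀ p, 1 ≤ p → 0 < γ p) ∧
      -- (a) `γ_{2p+1} → a` and `γ_{2p} → b` (limits in `[0,∞]`)
      Tendsto (fun p : ℕ => ENNReal.ofReal (γ (2 * p + 1))) atTop (nhds a) ∧
      Tendsto (fun p : ℕ => ENNReal.ofReal (γ (2 * p))) atTop (nhds b) ∧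
      -- (b) `ℓ_{p+1} - ℓ_p → ∞`
      Tendsto (fun p : ℕ => ℓ (p + 1) - ℓ p) atTop atTop ∧
      -- (c) `ℓ_p / e^{γ_p ℓ_p} → 0`
      Tendsto (fun p : ℕ => ℓ p / Real.exp (γ p * ℓ p)) atTop (nhds 0) ∧
      -- (d) `limsup γ_{p+1} ℓ_{p+1} / ℓ_p ≤ b` (in `[0,∞]`)
      Filter.atTop.limsup (fun p : ℕ => ENNReal.ofReal (γ (p + 1) * ℓ (p + 1) / ℓ p)) ≤ b ∧
      -- (e) `γ_p ℓ_p + 1 ≤ γ_{p+1} ℓ_{p+1}` for all `p ≥ 1`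
      (∀ p, 1 ≤ p → γ p * ℓ p + 1 ≤ γ (p + 1) * ℓ (p + 1)) ∧
      -- (f) for any `c ≥ 0`, `(c p + ∑_{j=1}^p ℓ_j)/e^{γ_p ℓ_p} → 0`
      (∀ c : ℝ, 0 ≤ c →
        Tendsto (fun p : ℕ => (c * p + ∑ j ∈ Finset.Icc 1 p, ℓ j) / Real.exp (γ p * ℓ p))
          atTop (nhds 0)) := by
  refine ⟨ell a b, gam a b, fun p _ => ell_pos a b p, fun p _ => gam_pos a b p,
    ?_, ?_, ?_, ?_, ?_, fun p _ => t_succ a b p, ?_⟩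
  · -- (a) odd
    have hf : Tendsto (fun p : ℕ => 2*p+1) atTop atTop :=
      tendsto_atTop_mono (f := id) (fun p => by simp only [id_eq]; omega) tendsto_id
    exact (tendsto_ofReal_G a _ hf).congr (fun p => by rw [gam_odd])
  · -- (a) even
    have hf : Tendsto (fun p : ℕ => 2*p) atTop atTop :=
      tendsto_atTop_mono (f := id) (fun p => by simp only [id_eq]; omega) tendsto_id
    exact (tendsto_ofReal_G b _ hf).congr (fun p => by rw [gam_even])
  · -- (b)
    apply tendsto_atTop_mono (f := fun p : ℕ => (p:ℝ)) ?_ tendsto_natCast_atTop_atTop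
    intro p
    have := ell_succ_ge a b p
    linarith
  · -- (c)
    apply squeeze_zero (g := fun p : ℕ => 2*((p:ℝ)+1) * Real.exp (-(((p:ℝ)+1)/2)))
    · intro p
      exact div_nonneg (ell_pos a b p).le (Real.exp_pos _).le
    · intro p
      exact key_bound a b p _ _ (by positivity) (ell_le_t a b p)
    · have h := (poly_exp 1).const_mul (2:ℝ)
      rw [mul_zero] at h
      exact h.congr (fun p => by ring_nf)
  · -- (d)
    by_cases hb : b = ⊤
    · simp [hb]
    · have ha : a ≠ ⊤ := fun h => hb (top_le_iff.mp (h ▸ hab))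
      set b' := b.toReal with hb'
      apply ENNReal.le_of_forall_pos_le_add
      intro ε hε _
      have hb'0 : 0 ≤ b' := ENNReal.toReal_nonneg
      have hu : Tendsto (fun p : ℕ => (b' + 1/((p:ℝ)+2)) * (1 + (p:ℝ)/ell a b p))
          atTop (nhds b') := by
        have h1 : Tendsto (fun p : ℕ => 1/((p:ℝ)+2)) atTop (nhds 0) := by
          have := (tendsto_one_div_add_atTop_nhds_zero_nat (𝕜 := ℝ)).comp (tendsto_add_atTop_nat 1)
          exact this.congr (fun p => by push_cast [Function.comp]; ring_nf)
        have h2 := (tendsto_const_nhds (x := b') (f := atTop (α := ℕ))).add h1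
        have h3 := (tendsto_const_nhds (x := (1:ℝ)) (f := atTop (α := ℕ))).add (div_ell_zero a b)
        have := h2.mul h3
        simpa using this
      have hv : Tendsto (fun p : ℕ => b' + 1/((p:ℝ)+1) + 1/ell a b p)
          atTop (nhds b') := by
        have h1 : Tendsto (fun p : ℕ => 1/((p:ℝ)+1)) atTop (nhds 0) := by
          exact_mod_cast tendsto_one_div_add_atTop_nhds_zero_nat (𝕜 := ℝ)
        have := ((tendsto_const_nhds (x := b') (f := atTop (α := ℕ))).add h1).add (inv_ell_zero a b)
        simpa using this
      have hbe : b' < b' + ε := by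
        have : (0:ℝ) < ε := hε
        linarith
      have hkey : ∀ p : ℕ, gam a b (p+1) * ell a b (p+1) / ell a b p
          ≤ max ((b' + 1/((p:ℝ)+2)) * (1 + (p:ℝ)/ell a b p))
              (b' + 1/((p:ℝ)+1) + 1/ell a b p) := by
        intro p
        have hg := gam_pos a b (p+1)
        have hgp := gam_pos a b p
        have hl := ell_pos a b p
        have hmul : gam a b (p+1) * ell a b (p+1)
            = max (gam a b (p+1) * (ell a b p + p)) (gam a b p * ell a b p + 1) := by
          rw [ell_succ, mul_max_of_nonneg _ _ hg.le]
          congr 1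
          field_simp
        rw [hmul]
        rcases max_cases (gam a b (p+1) * (ell a b p + p)) (gam a b p * ell a b p + 1) with
          ⟨h1, _⟩ | ⟨h1, _⟩ <;> rw [h1]
        · refine le_max_of_le_left ?_
          have hgle : gam a b (p+1) ≤ b' + 1/((p:ℝ)+2) := by
            have h := gam_le a b ha hb hab (p+1)
            push_cast at h
            have heq2 : ((p:ℝ)+1)+1 = (p:ℝ)+2 := by ring
            rw [heq2] at h
            exact h
          have heq : gam a b (p+1) * (ell a b p + p) / ell a b p
              = gam a b (p+1) * (1 + (p:ℝ)/ell a b p) := by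
            field_simp
          rw [heq]
          have hfac : (0:ℝ) ≤ 1 + (p:ℝ)/ell a b p := by positivity
          exact mul_le_mul_of_nonneg_right hgle hfac
        · refine le_max_of_le_right ?_
          have heq : (gam a b p * ell a b p + 1) / ell a b p
              = gam a b p + 1/ell a b p := by
            field_simp
          rw [heq]
          have hgle : gam a b p ≤ b' + 1/((p:ℝ)+1) := gam_le a b ha hb hab p
          linarith
      have hev : ∀ᶠ p : ℕ in atTop,
          ENNReal.ofReal (gam a b (p+1) * ell a b (p+1) / ell a b p)
            ≤ ENNReal.ofReal (b' + ε) := by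
        filter_upwards [hu.eventually_lt_const hbe, hv.eventually_lt_const hbe] with p h1 h2
        apply ENNReal.ofReal_le_ofReal
        calc gam a b (p+1) * ell a b (p+1) / ell a b p
            ≤ max ((b' + 1/((p:ℝ)+2)) * (1 + (p:ℝ)/ell a b p))
                (b' + 1/((p:ℝ)+1) + 1/ell a b p) := hkey p
          _ ≤ b' + ε := max_le h1.le h2.le
      calc Filter.atTop.limsup (fun p : ℕ =>
              ENNReal.ofReal (gam a b (p+1) * ell a b (p+1) / ell a b p))
          ≤ ENNReal.ofReal (b' + ε) := limsup_le_of_le (by isBoundedDefault) hev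
        _ = ENNReal.ofReal b' + ENNReal.ofReal ε := ENNReal.ofReal_add hb'0 hε.le
        _ = b + ε := by
            rw [ENNReal.ofReal_toReal hb, ENNReal.ofReal_coe_nnreal]
  · -- (f)
    intro c hc
    apply squeeze_zero (g := fun p : ℕ =>
      2*(c*((p:ℝ)+1) + ((p:ℝ)+1)^2) * Real.exp (-(((p:ℝ)+1)/2)))
    · intro p
      apply div_nonneg _ (Real.exp_pos _).le
      have : (0:ℝ) ≤ ∑ j ∈ Finset.Icc 1 p, ell a b j :=
        Finset.sum_nonneg (fun j _ => (ell_pos a b j).le)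
      positivity
    · intro p
      have hsum : ∑ j ∈ Finset.Icc 1 p, ell a b j ≤ (p:ℝ) * ell a b p := by
        have h := Finset.sum_le_card_nsmul (Finset.Icc 1 p) (ell a b) (ell a b p)
          (fun j hj => ell_mono a b (Finset.mem_Icc.mp hj).2)
        simpa [Nat.card_Icc, nsmul_eq_mul] using h
      have ht := t_ge a b p
      have hlt := ell_le_t a b p
      have hl := ell_pos a b p
      have htp := t_pos a b p
      have hp0 : (0:ℝ) ≤ (p:ℝ) := Nat.cast_nonneg p
      apply key_bound a b p _ _ (by positivity)
      have h1 : c * (p:ℝ) ≤ c*((p:ℝ)+1) * (gam a b p * ell a b p) := by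
        have e1 : c * (p:ℝ) ≤ c * ((p:ℝ)+1) :=
          mul_le_mul_of_nonneg_left (by linarith) hc
        have e2 : c*((p:ℝ)+1) * 1 ≤ c*((p:ℝ)+1) * (gam a b p * ell a b p) :=
          mul_le_mul_of_nonneg_left (by linarith) (by positivity)
        linarith
      have h2 : (p:ℝ) * ell a b p ≤ ((p:ℝ)+1)^2 * (gam a b p * ell a b p) := by
        have e1 : (p:ℝ) * ell a b p ≤ (p:ℝ) * (((p:ℝ)+1) * (gam a b p * ell a b p)) :=
          mul_le_mul_of_nonneg_left hlt hp0
        nlinarith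
      calc c * (p:ℝ) + ∑ j ∈ Finset.Icc 1 p, ell a b j
          ≤ c * (p:ℝ) + (p:ℝ) * ell a b p := by linarith
        _ ≤ c*((p:ℝ)+1) * (gam a b p * ell a b p)
              + ((p:ℝ)+1)^2 * (gam a b p * ell a b p) := by linarith
        _ = (c*((p:ℝ)+1) + ((p:ℝ)+1)^2) * (gam a b p * ell a b p) := by ring
    · have h1 := (poly_exp 1).const_mul (2*c)
      have h2 := (poly_exp 2).const_mul (2:ℝ)
      rw [mul_zero] at h1 h2
      have := h1.add h2
      rw [add_zero] at this
      exact this.congr (fun p => by ring_nf)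

end Paper
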